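/- Fix a node i of a finite simple graph G on N vertices with degree d and incident triangle count τ, and perturb every adjacency bit of G independently by randomized response with keep probability p with p²(2p−1) ≠ 0. Let τ̃_i be the number of pairs {j,k} of vertices distinct from i whose three perturbed adjacency bits for {i,j}, {i,k}, {j,k} all equal 1. Suppose the perturbed degree reported for i equals d, and suppose there is a real number θ̃ such that Σ_{exactly one neighbor} q_{jk} = d(N−d−1)·θ̃ and Σ_{neither neighbor} q_{jk} = (1/2)(N−d−1)(N−d−2)·θ̃, where q_{jk} = p if {j,k} is an edge of G and q_{jk} = 1−p otherwise, and the sums range over pairs {j,k} ⊆ V∖{i} with exactly one, respectively neither, of j, k an original neighbor of i. Then applying the calibration function (with parameters p, d̃ = d, θ̃, N) to the expected perturbed triangle count recovers the true triangle count: R(E[τ̃_i]) = τ. -/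

import Mathlib

open Finset

attribute [local instance] Classical.propDecidable

/-- The probability weight, under randomized response with keep probability `p` applied
independently to every adjacency bit of the simple graph `G`, that the perturbed
adjacency bits are exactly `f`. -/
noncomputable def rrWeight {V : Type*} [Fintype V] [DecidableEq V]
    (G : SimpleGraph V) (p : ℝ) (f : Sym2 V → Bool) : ℝ :=
  ∏ e : Sym2 V, if (f e = true ↔ e ∈ G.edgeSet) then p else 1 - p

lemma sum_rrWeight_prod {V : Type*} [Fintype V] [DecidableEq V]
    (G : SimpleGraph V) (p : ℝ) (T : Finset (Sym2 V)) :
    ∑ f : Sym2 V → Bool, rrWeight G p f * (∏ e ∈ T, if f e = true then (1:ℝ) else 0)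
      = ∏ e ∈ T, (if e ∈ G.edgeSet then p else 1 - p) := by
  classical
  set g : Sym2 V → Bool → ℝ := fun e b =>
    (if (b = true ↔ e ∈ G.edgeSet) then p else 1 - p) *
      (if e ∈ T then (if b = true then (1:ℝ) else 0) else 1) with hg
  have h1 : ∀ f : Sym2 V → Bool,
      rrWeight G p f * (∏ e ∈ T, if f e = true then (1:ℝ) else 0)
        = ∏ e : Sym2 V, g e (f e) := by
    intro f
    rw [hg]
    simp only []
    rw [Finset.prod_mul_distrib, rrWeight]
    congr 1
    rw [Finset.prod_ite_mem, univ_inter]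
  simp_rw [h1]
  rw [← Fintype.piFinset_univ, Finset.sum_prod_piFinset]
  rw [← univ_inter T, ← Finset.prod_ite_mem]
  apply Finset.prod_congr rfl
  intro e _
  rw [Fintype.sum_bool]
  by_cases hT : e ∈ T <;> by_cases hE : e ∈ G.edgeSet <;> simp [hg, hT, hE]

/-- Fix a node `i` of a finite simple graph `G` on `N` vertices with degree
`d` and incident triangle count `τ`; perturb every adjacency bit independently by
randomized response with keep probability `p` with `p²(2p−1) ≠ 0`. Let `τ̃ᵢ` count the
pairs `{j,k}` of vertices distinct from `i` whose three perturbed bits all equal 1.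
Suppose the perturbed degree reported for `i` equals `d`, and there is `θ̃` with
`Σ_{exactly one neighbor} q_{jk} = d(N−d−1)·θ̃` and
`Σ_{neither neighbor} q_{jk} = (1/2)(N−d−1)(N−d−2)·θ̃` (`q_{jk} = p` if `{j,k}` is an
edge, else `1−p`). Then the calibration function applied to the expected perturbed
triangle count recovers the true triangle count: `R(E[τ̃ᵢ]) = τ`. -/
theorem calibration_of_expected_triangle_count
    {V : Type*} [Fintype V] [DecidableEq V]
    (G : SimpleGraph V) [DecidableRel G.Adj]
    (p : ℝ) (hp0 : 0 ≤ p) (hp1 : p ≤ 1)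
    (hp : p ^ 2 * (2 * p - 1) ≠ 0) (i : V)
    (N d τ : ℕ) (hN : N = Fintype.card V) (hd : d = G.degree i)
    (allPairs pairsOne pairsNone : Finset (Sym2 V))
    (hall : allPairs = univ.filter (fun e : Sym2 V => ¬ e.IsDiag ∧ i ∉ e))
    (hone : pairsOne = allPairs.filter (fun e =>
        (∃ x ∈ e, G.Adj i x) ∧ ∃ x ∈ e, ¬ G.Adj i x))
    (hnone : pairsNone = allPairs.filter (fun e => ∀ x ∈ e, ¬ G.Adj i x))
    (hτ : τ = ((allPairs.filter (fun e => ∀ x ∈ e, G.Adj i x)).filter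
        (fun e => e ∈ G.edgeSet)).card)
    (θ : ℝ)
    (hθone : (∑ e ∈ pairsOne, if e ∈ G.edgeSet then p else 1 - p)
        = (d : ℝ) * ((N : ℝ) - d - 1) * θ)
    (hθnone : (∑ e ∈ pairsNone, if e ∈ G.edgeSet then p else 1 - p)
        = (1 / 2) * ((N : ℝ) - d - 1) * ((N : ℝ) - d - 2) * θ)
    (R : ℝ → ℝ)
    (hR : ∀ x, R x = (1 / (p ^ 2 * (2 * p - 1))) *
        (x - (1 / 2) * (d : ℝ) * ((d : ℝ) - 1) * p ^ 2 * (1 - p)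
          - (d : ℝ) * ((N : ℝ) - d - 1) * p * (1 - p) * θ
          - (1 / 2) * ((N : ℝ) - d - 1) * ((N : ℝ) - d - 2) * (1 - p) ^ 2 * θ)) :
    R (∑ f : Sym2 V → Bool, rrWeight G p f *
        ((allPairs.filter (fun e =>
            f e = true ∧ ∀ x ∈ e, f (s(i, x)) = true)).card : ℝ))
      = (τ : ℝ) := by
    classical
  set q : Sym2 V → ℝ := fun e => if e ∈ G.edgeSet then p else 1 - p with hq
  set W : Sym2 V → ℝ := fun e => q e *
    Sym2.lift ⟨fun a b => q (s(i, a)) * q (s(i, b)),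
      fun a b => mul_comm _ _⟩ e with hWdef
  set pairsTwo : Finset (Sym2 V) := allPairs.filter (fun e => ∀ x ∈ e, G.Adj i x) with hTwo
  -- Step A: rewrite the expectation as a sum over pairs
  have hE : (∑ f : Sym2 V → Bool, rrWeight G p f *
        ((allPairs.filter (fun e =>
            f e = true ∧ ∀ x ∈ e, f (s(i, x)) = true)).card : ℝ))
      = ∑ e ∈ allPairs, W e := by
    have hcard : ∀ f : Sym2 V → Bool,
        ((allPairs.filter (fun e =>
            f e = true ∧ ∀ x ∈ e, f (s(i, x)) = true)).card : ℝ)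
          = ∑ e ∈ allPairs,
              if (f e = true ∧ ∀ x ∈ e, f (s(i, x)) = true) then (1:ℝ) else 0 := by
      intro f
      rw [Finset.sum_boole]
    simp_rw [hcard, Finset.mul_sum]
    rw [Finset.sum_comm]
    apply Finset.sum_congr rfl
    intro e he
    rw [hall, Finset.mem_filter] at he
    obtain ⟨-, hnd, hie⟩ := he
    revert hnd hie
    induction e using Sym2.ind with
    | _ j k =>
      intro hnd hie
      have hjk : j ≠ k := fun h => hnd (Sym2.mk_isDiag_iff.2 h)
      have hij : i ≠ j := fun h => hie (h ▸ Sym2.mem_mk_left i k)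
      have hik : i ≠ k := fun h => hie (h ▸ Sym2.mem_mk_right j i)
      set T : Finset (Sym2 V) := {s(j, k), s(i, j), s(i, k)} with hT
      have hne1 : s(j, k) ∉ ({s(i, j), s(i, k)} : Finset (Sym2 V)) := by
        simp only [Finset.mem_insert, Finset.mem_singleton]
        rintro (h | h) <;> exact hie (h ▸ Sym2.mem_mk_left i _)
      have hne2 : s(i, j) ∉ ({s(i, k)} : Finset (Sym2 V)) := by
        simp only [Finset.mem_singleton, Sym2.eq_iff]
        rintro (⟨-, h⟩ | ⟨h, -⟩)
        · exact hjk h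
        · exact hik h
      have hind : ∀ f : Sym2 V → Bool,
          (if (f (s(j, k)) = true ∧
              ∀ x ∈ s(j, k), f (s(i, x)) = true) then (1:ℝ) else 0)
            = ∏ e' ∈ T, (if f e' = true then (1:ℝ) else 0) := by
        intro f
        rw [hT, Finset.prod_insert hne1, Finset.prod_insert hne2, Finset.prod_singleton]
        by_cases h1 : f (s(j, k)) = true <;>
          by_cases h2 : f (s(i, j)) = true <;>
          by_cases h3 : f (s(i, k)) = true <;>
          simp [Sym2.ball, h1, h2, h3]
      simp_rw [hind]
      rw [sum_rrWeight_prod G p T]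
      rw [hT, Finset.prod_insert hne1, Finset.prod_insert hne2, Finset.prod_singleton]
      rw [hWdef]
      simp only [Sym2.lift_mk]
      simp only [hq]
      congr
  rw [hE]
  -- Step C: partition allPairs
  have hmemnd : ∀ e ∈ allPairs, ¬ e.IsDiag := by
    intro e he; rw [hall, Finset.mem_filter] at he; exact he.2.1
  have hsplit : ∑ e ∈ allPairs, W e
      = ∑ e ∈ pairsTwo, W e + (∑ e ∈ pairsOne, W e + ∑ e ∈ pairsNone, W e) := by
    rw [← Finset.sum_filter_add_sum_filter_not allPairs (fun e => ∀ x ∈ e, G.Adj i x) W]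
    congr 1
    rw [← Finset.sum_filter_add_sum_filter_not
      (allPairs.filter (fun e => ¬ ∀ x ∈ e, G.Adj i x)) (fun e => ∃ x ∈ e, G.Adj i x) W]
    congr 1
    · congr 1
      rw [hone, Finset.filter_filter]
      apply Finset.filter_congr
      intro e he
      push_neg
      constructor
      · rintro ⟨⟨x, hx, hax⟩, y, hy, hay⟩; exact ⟨⟨y, hy, hay⟩, x, hx, hax⟩
      · rintro ⟨⟨y, hy, hay⟩, x, hx, hax⟩; exact ⟨⟨x, hx, hax⟩, y, hy, hay⟩
    · congr 1
      rw [hnone, Finset.filter_filter]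
      apply Finset.filter_congr
      intro e he
      push_neg
      constructor
      · rintro ⟨-, h⟩; exact h
      · intro h
        refine ⟨?_, h⟩
        induction e using Sym2.ind with
        | _ a b => exact ⟨a, Sym2.mem_mk_left a b, h a (Sym2.mem_mk_left a b)⟩
  rw [hsplit]
  -- Step D: values of W on each part
  have hadj_q : ∀ a : V, G.Adj i a → q (s(i, a)) = p := by
    intro a ha; rw [hq]; simp only [SimpleGraph.mem_edgeSet] at *; simp [ha]
  have hnadj_q : ∀ a : V, ¬ G.Adj i a → q (s(i, a)) = 1 - p := by
    intro a ha; rw [hq]; simp only []; rw [if_neg]; rwa [SimpleGraph.mem_edgeSet]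
  have hW2 : ∑ e ∈ pairsTwo, W e = p ^ 2 * ∑ e ∈ pairsTwo, q e := by
    rw [Finset.mul_sum]
    apply Finset.sum_congr rfl
    intro e he
    rw [hTwo, Finset.mem_filter] at he
    obtain ⟨-, hall2⟩ := he
    revert hall2
    induction e using Sym2.ind with
    | _ a b =>
      intro hall2
      rw [Sym2.ball] at hall2
      rw [hWdef]
      simp only [Sym2.lift_mk]
      rw [hadj_q a hall2.1, hadj_q b hall2.2]
      ring
  have hW1 : ∑ e ∈ pairsOne, W e = (p * (1 - p)) * ((d : ℝ) * ((N : ℝ) - d - 1) * θ) := by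
    rw [← hθone, Finset.mul_sum]
    apply Finset.sum_congr rfl
    intro e he
    rw [hone, Finset.mem_filter] at he
    obtain ⟨-, hex, hnex⟩ := he
    revert hex hnex
    induction e using Sym2.ind with
    | _ a b =>
      intro hex hnex
      rw [hWdef]
      simp only [Sym2.lift_mk]
      obtain ⟨x, hx, hax⟩ := hex
      obtain ⟨y, hy, hay⟩ := hnex
      rw [Sym2.mem_iff] at hx hy
      have : (G.Adj i a ∧ ¬ G.Adj i b) ∨ (G.Adj i b ∧ ¬ G.Adj i a) := by
        rcases hx with rfl | rfl <;> rcases hy with rfl | rfl <;> tauto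
      rcases this with ⟨h1, h2⟩ | ⟨h1, h2⟩
      · rw [hadj_q a h1, hnadj_q b h2]; ring
      · rw [hnadj_q a h2, hadj_q b h1]; ring
  have hW0 : ∑ e ∈ pairsNone, W e
      = (1 - p) ^ 2 * ((1 / 2) * ((N : ℝ) - d - 1) * ((N : ℝ) - d - 2) * θ) := by
    rw [← hθnone, Finset.mul_sum]
    apply Finset.sum_congr rfl
    intro e he
    rw [hnone, Finset.mem_filter] at he
    obtain ⟨-, hnone2⟩ := he
    revert hnone2
    induction e using Sym2.ind with
    | _ a b =>
      intro hnone2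
      rw [Sym2.ball] at hnone2
      rw [hWdef]
      simp only [Sym2.lift_mk]
      rw [hnadj_q a hnone2.1, hnadj_q b hnone2.2]
      ring
  -- Step E/F: the pairsTwo sum
  have hcard2 : ((pairsTwo.card : ℝ)) = (d : ℝ) * ((d : ℝ) - 1) / 2 := by
    have himg : pairsTwo = (G.neighborFinset i).offDiag.image Sym2.mk.uncurry := by
      ext e
      induction e using Sym2.ind with
      | _ a b =>
        constructor
        · intro he
          rw [hTwo, Finset.mem_filter] at he
          obtain ⟨he1, he2⟩ := he
          rw [hall, Finset.mem_filter] at he1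
          obtain ⟨-, hnd, -⟩ := he1
          rw [Sym2.ball] at he2
          refine Finset.mem_image.2 ⟨(a, b), Finset.mem_offDiag.2 ⟨?_, ?_, ?_⟩, rfl⟩
          · exact (G.mem_neighborFinset i a).2 he2.1
          · exact (G.mem_neighborFinset i b).2 he2.2
          · exact fun h => hnd (Sym2.mk_isDiag_iff.2 h)
        · intro he
          obtain ⟨⟨x, y⟩, hxy, hmk⟩ := Finset.mem_image.1 he
          rw [Finset.mem_offDiag] at hxy
          obtain ⟨hx, hy, hne⟩ := hxy
          rw [SimpleGraph.mem_neighborFinset] at hx hy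
          rw [hTwo, Finset.mem_filter, hall, Finset.mem_filter, ← hmk]
          refine ⟨⟨Finset.mem_univ _, ?_, ?_⟩, ?_⟩
          · exact fun h => hne (Sym2.mk_isDiag_iff.1 h)
          · intro hi
            rcases Sym2.mem_iff.1 hi with rfl | rfl
            · exact G.irrefl hx
            · exact G.irrefl hy
          · rw [Function.uncurry_apply_pair, Sym2.ball]
            exact ⟨hx, hy⟩
    rw [himg, Sym2.card_image_offDiag, SimpleGraph.card_neighborFinset_eq_degree, ← hd,
      Nat.cast_choose_two]
  have hsum2 : ∑ e ∈ pairsTwo, q e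
      = p * (τ : ℝ) + (1 - p) * ((d : ℝ) * ((d : ℝ) - 1) / 2 - (τ : ℝ)) := by
    rw [← Finset.sum_filter_add_sum_filter_not pairsTwo (fun e => e ∈ G.edgeSet) q]
    have h1 : ∑ e ∈ pairsTwo.filter (fun e => e ∈ G.edgeSet), q e
        = p * (τ : ℝ) := by
      have hc : ∀ e ∈ pairsTwo.filter (fun e => e ∈ G.edgeSet), q e = p := by
        intro e he
        rw [Finset.mem_filter] at he
        rw [hq]
        simp [he.2]
      rw [Finset.sum_congr rfl hc, Finset.sum_const, nsmul_eq_mul, hτ]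
      ring
    have h2 : ∑ e ∈ pairsTwo.filter (fun e => ¬ e ∈ G.edgeSet), q e
        = (1 - p) * ((pairsTwo.filter (fun e => ¬ e ∈ G.edgeSet)).card : ℝ) := by
      have hc : ∀ e ∈ pairsTwo.filter (fun e => ¬ e ∈ G.edgeSet), q e = 1 - p := by
        intro e he
        rw [Finset.mem_filter] at he
        rw [hq]
        simp [he.2]
      rw [Finset.sum_congr rfl hc, Finset.sum_const, nsmul_eq_mul]
      ring
    have h3 : ((pairsTwo.filter (fun e => ¬ e ∈ G.edgeSet)).card : ℝ)
        = (d : ℝ) * ((d : ℝ) - 1) / 2 - (τ : ℝ) := by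
      have := Finset.card_filter_add_card_filter_not
        (s := pairsTwo) (p := fun e => e ∈ G.edgeSet)
      have hcast : ((pairsTwo.filter (fun e => e ∈ G.edgeSet)).card : ℝ)
          + ((pairsTwo.filter (fun e => ¬ e ∈ G.edgeSet)).card : ℝ) = (pairsTwo.card : ℝ) := by
        exact_mod_cast congrArg (Nat.cast : ℕ → ℝ) this
      have hτ' : ((pairsTwo.filter (fun e => e ∈ G.edgeSet)).card : ℝ) = (τ : ℝ) := by
        rw [hτ, hTwo]
      rw [hτ'] at hcast
      rw [← hcard2]
      linarith
    rw [h1, h2, h3]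
  -- Step G: combine
  rw [hW2, hsum2, hW1, hW0, hR]
  rw [one_div, inv_mul_eq_iff_eq_mul₀ hp]
  ring
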